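/- For a normalised Brownian excursion W, the volume of the ball of radius r about the root satisfies the exponential tail bound: for all θ ∈ (0,1), r > 0 and λ ≥ 1, P(μ(B(ρ,r)) ≥ r²λ) ≤ e^{-θλ}/(1-θ)². In particular there exist constants c₇, c₈ ∈ (0,∞) with P(μ(B(ρ,r)) ≥ r²λ) ≤ c₇ e^{-c₈ λ} for all r > 0, λ ≥ 1. -/

import Mathlib

open MeasureTheory Set

lemma exp_tsum_real (x : ℝ) : Real.exp x = ∑' n : ℕ, x ^ n / n.factorial := by
  rw [Real.exp_eq_exp_ℝ, NormedSpace.exp_eq_tsum_div]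

lemma sum_aux {θ : ℝ} (h0 : 0 < θ) (h1 : θ < 1) :
    ∑' k : ℕ, ((k : ℝ) + 1) * θ ^ k = 1 / (1 - θ) ^ 2 := by
  have hn : ‖θ‖ < 1 := by rw [Real.norm_eq_abs, abs_of_pos h0]; exact h1
  have hs1 : Summable (fun k : ℕ => (k : ℝ) * θ ^ k) := by
    simpa using summable_pow_mul_geometric_of_norm_lt_one 1 hn
  have hs2 : Summable (fun k : ℕ => θ ^ k) := summable_geometric_of_lt_one h0.le h1
  have : (fun k : ℕ => ((k : ℝ) + 1) * θ ^ k)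
      = fun k : ℕ => (k : ℝ) * θ ^ k + θ ^ k := by
    funext k; ring
  rw [this, hs1.tsum_add hs2, tsum_coe_mul_geometric_of_norm_lt_one hn,
    tsum_geometric_of_lt_one h0.le h1]
  have h1θ : (1 : ℝ) - θ ≠ 0 := by linarith
  field_simp
  ring

lemma sum_aux' {θ : ℝ} (h0 : 0 < θ) (h1 : θ < 1) :
    ∑' k : ℕ, ENNReal.ofReal (((k : ℝ) + 1) * θ ^ k) = ENNReal.ofReal (1 / (1 - θ) ^ 2) := by
  rw [← sum_aux h0 h1, ← ENNReal.ofReal_tsum_of_nonneg]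
  · intro k; positivity
  · have hn : ‖θ‖ < 1 := by rw [Real.norm_eq_abs, abs_of_pos h0]; exact h1
    have hs1 : Summable (fun k : ℕ => (k : ℝ) * θ ^ k) := by
      simpa using summable_pow_mul_geometric_of_norm_lt_one 1 hn
    have hs2 : Summable (fun k : ℕ => θ ^ k) := summable_geometric_of_lt_one h0.le h1
    have : (fun k : ℕ => ((k : ℝ) + 1) * θ ^ k)
        = fun k : ℕ => (k : ℝ) * θ ^ k + θ ^ k := by
      funext k; ring
    rw [this]; exact hs1.add hs2

theorem stmt_4 {Ω : Type*} [MeasurableSpace Ω] (P : Measure Ω) [IsProbabilityMeasure P]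
    (V : ℝ → Ω → ℝ) (hnn : ∀ r ω, 0 ≤ V r ω) (hmeas : ∀ r, Measurable (V r))
    (hmom : ∀ (k : ℕ) (r : ℝ), 0 < r →
      ∫⁻ ω, ENNReal.ofReal ((V r ω) ^ k) ∂P ≤
        ENNReal.ofReal ((Nat.factorial (k + 1) : ℝ) * r ^ (2 * k))) :
    (∀ θ ∈ Ioo (0:ℝ) 1, ∀ r : ℝ, 0 < r → ∀ lam : ℝ, 1 ≤ lam →
      P {ω | r ^ 2 * lam ≤ V r ω} ≤
        ENNReal.ofReal (Real.exp (-θ * lam) / (1 - θ) ^ 2)) ∧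
    ∃ c₇ > (0:ℝ), ∃ c₈ > (0:ℝ), ∀ r : ℝ, 0 < r → ∀ lam : ℝ, 1 ≤ lam →
      P {ω | r ^ 2 * lam ≤ V r ω} ≤ ENNReal.ofReal (c₇ * Real.exp (-c₈ * lam)) := by
  have main : ∀ θ ∈ Ioo (0:ℝ) 1, ∀ r : ℝ, 0 < r → ∀ lam : ℝ, 1 ≤ lam →
      P {ω | r ^ 2 * lam ≤ V r ω} ≤
        ENNReal.ofReal (Real.exp (-θ * lam) / (1 - θ) ^ 2) := by
    rintro θ ⟨hθ0, hθ1⟩ r hr lam hlam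
    have hr2 : (0 : ℝ) < r ^ 2 := by positivity
    -- MGF bound
    have hMGF : ∫⁻ ω, ENNReal.ofReal (Real.exp (θ * V r ω / r ^ 2)) ∂P ≤
        ENNReal.ofReal (1 / (1 - θ) ^ 2) := by
      have hpt : ∀ ω, ENNReal.ofReal (Real.exp (θ * V r ω / r ^ 2)) =
          ∑' k : ℕ, ENNReal.ofReal ((θ * V r ω / r ^ 2) ^ k / k.factorial) := by
        intro ω
        rw [exp_tsum_real, ENNReal.ofReal_tsum_of_nonneg]
        · intro k
          have hV := hnn r ω
          have h : 0 ≤ θ * V r ω / r ^ 2 := by positivity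
          positivity
        · exact Real.summable_pow_div_factorial _
      calc ∫⁻ ω, ENNReal.ofReal (Real.exp (θ * V r ω / r ^ 2)) ∂P
          = ∑' k : ℕ, ∫⁻ ω, ENNReal.ofReal ((θ * V r ω / r ^ 2) ^ k / k.factorial) ∂P := by
            simp_rw [hpt]
            exact lintegral_tsum fun k => (ENNReal.measurable_ofReal.comp
              (((((hmeas r).const_mul θ).div_const _).pow_const k).div_const _)).aemeasurable
        _ ≤ ∑' k : ℕ, ENNReal.ofReal (((k : ℝ) + 1) * θ ^ k) := by
            refine ENNReal.tsum_le_tsum fun k => ?_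
            have hc : (0 : ℝ) ≤ θ ^ k / (r ^ (2 * k) * k.factorial) := by positivity
            have heq : ∀ ω, ENNReal.ofReal ((θ * V r ω / r ^ 2) ^ k / k.factorial) =
                ENNReal.ofReal (θ ^ k / (r ^ (2 * k) * k.factorial)) *
                  ENNReal.ofReal ((V r ω) ^ k) := by
              intro ω
              rw [← ENNReal.ofReal_mul hc]
              congr 1
              rw [mul_div_assoc θ, mul_pow, div_pow, ← pow_mul]
              field_simp
            calc ∫⁻ ω, ENNReal.ofReal ((θ * V r ω / r ^ 2) ^ k / k.factorial) ∂P
                = ENNReal.ofReal (θ ^ k / (r ^ (2 * k) * k.factorial)) *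
                    ∫⁻ ω, ENNReal.ofReal ((V r ω) ^ k) ∂P := by
                  simp_rw [heq]
                  exact lintegral_const_mul _ (ENNReal.measurable_ofReal.comp
                    ((hmeas r).pow_const k))
              _ ≤ ENNReal.ofReal (θ ^ k / (r ^ (2 * k) * k.factorial)) *
                    ENNReal.ofReal ((Nat.factorial (k + 1) : ℝ) * r ^ (2 * k)) :=
                  mul_le_mul_right (hmom k r hr) _
              _ = ENNReal.ofReal (((k : ℝ) + 1) * θ ^ k) := by
                  rw [← ENNReal.ofReal_mul hc]
                  congr 1
                  have hfac : (Nat.factorial (k + 1) : ℝ) = ((k : ℝ) + 1) * k.factorial := by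
                    rw [Nat.factorial_succ]; push_cast; ring
                  have hrk : (0:ℝ) < r ^ (2 * k) := by positivity
                  have hfk : (0:ℝ) < (k.factorial : ℝ) := by positivity
                  field_simp [hfac]
                  push_cast [Nat.factorial_succ]
                  ring
        _ = ENNReal.ofReal (1 / (1 - θ) ^ 2) := sum_aux' hθ0 hθ1
    -- Markov
    have hsub : {ω | r ^ 2 * lam ≤ V r ω} ⊆
        {ω | ENNReal.ofReal (Real.exp (θ * lam)) ≤
          ENNReal.ofReal (Real.exp (θ * V r ω / r ^ 2))} := by
      intro ω hω
      simp only [mem_setOf_eq] at hω ⊢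
      apply ENNReal.ofReal_le_ofReal
      apply Real.exp_le_exp.2
      rw [le_div_iff₀ hr2]
      calc θ * lam * r ^ 2 = θ * (r ^ 2 * lam) := by ring
        _ ≤ θ * V r ω := by exact mul_le_mul_of_nonneg_left hω hθ0.le
    have hmark := mul_meas_ge_le_lintegral₀
      (μ := P) (f := fun ω => ENNReal.ofReal (Real.exp (θ * V r ω / r ^ 2)))
      ((ENNReal.measurable_ofReal.comp
        (Real.measurable_exp.comp (((hmeas r).const_mul θ).div_const _))).aemeasurable)
      (ENNReal.ofReal (Real.exp (θ * lam)))
    have h1 : ENNReal.ofReal (Real.exp (θ * lam)) * P {ω | r ^ 2 * lam ≤ V r ω} ≤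
        ENNReal.ofReal (1 / (1 - θ) ^ 2) :=
      le_trans (le_trans (mul_le_mul_right (measure_mono hsub) _) hmark) hMGF
    have hex0 : ENNReal.ofReal (Real.exp (θ * lam)) ≠ 0 := by
      simp [Real.exp_pos]
    have hext : ENNReal.ofReal (Real.exp (θ * lam)) ≠ ⊤ := ENNReal.ofReal_ne_top
    have h2 : P {ω | r ^ 2 * lam ≤ V r ω} ≤
        ENNReal.ofReal (1 / (1 - θ) ^ 2) / ENNReal.ofReal (Real.exp (θ * lam)) := by
      rw [ENNReal.le_div_iff_mul_le (Or.inl hex0) (Or.inl hext), mul_comm]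
      exact h1
    refine h2.trans_eq ?_
    rw [← ENNReal.ofReal_div_of_pos (Real.exp_pos _)]
    congr 1
    rw [neg_mul, Real.exp_neg]
    field_simp
  refine ⟨main, ?_⟩
  refine ⟨4, by norm_num, 1/2, by norm_num, fun r hr lam hlam => ?_⟩
  have := main (1/2) ⟨by norm_num, by norm_num⟩ r hr lam hlam
  refine this.trans_eq ?_
  congr 1
  norm_num
  rw [← neg_mul]
  ring
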